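/- Let d ∈ {2,3} and s ∈ [0, 1/2]. There exists a constant C > 0, depending only on d and s, such that for all k, t > 0 with kt ≥ 1 and all measurable functions F, G : ℝ^d → [0, ∞), ∫_{{ξ : ‖ξ⁻‖ < kt/2 and |ξ_d| > kt/2}} (1 + ‖ξ‖²)^s · ((‖ξ⁻‖ + kt)² + ξ_d²)^{−1/2} · F(ξ) G(ξ) dξ ≤ C (kt)^{2s−1} ‖F‖_{L²(ℝ^d)} ‖G‖_{L²(ℝ^d)}. -/

import Mathlib

open MeasureTheory
open scoped ENNReal

/-- `‖ξ⁻‖`, the Euclidean norm of the first `d − 1` coordinates of `ξ ∈ ℝ^d`. -/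
noncomputable def xiMinusNorm {d : ℕ} (ξ : EuclideanSpace ℝ (Fin d)) : ℝ :=
  Real.sqrt (∑ i ∈ Finset.univ.filter (fun i : Fin d => (i : ℕ) < d - 1), ξ i ^ 2)

/-- `ξ_d`, the last coordinate of `ξ ∈ ℝ^d`. -/
noncomputable def xiLast {d : ℕ} (hd : 0 < d) (ξ : EuclideanSpace ℝ (Fin d)) : ℝ :=
  ξ ⟨d - 1, Nat.sub_lt hd one_pos⟩

lemma norm_sq_split {d : ℕ} (hd : 0 < d) (ξ : EuclideanSpace ℝ (Fin d)) :
    ‖ξ‖ ^ 2 = xiMinusNorm ξ ^ 2 + xiLast hd ξ ^ 2 := by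
  have h1 : ‖ξ‖ ^ 2 = ∑ i : Fin d, ξ i ^ 2 := by
    rw [EuclideanSpace.norm_eq, Real.sq_sqrt (by positivity)]
    simp [Real.norm_eq_abs, sq_abs]
  have h2 : xiMinusNorm ξ ^ 2
      = ∑ i ∈ Finset.univ.filter (fun i : Fin d => (i : ℕ) < d - 1), ξ i ^ 2 := by
    rw [xiMinusNorm, Real.sq_sqrt (by positivity)]
  have h3 : Finset.univ.filter (fun i : Fin d => ¬ (i : ℕ) < d - 1)
      = {(⟨d - 1, Nat.sub_lt hd one_pos⟩ : Fin d)} := by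
    ext i
    simp only [Finset.mem_filter, Finset.mem_univ, true_and, Finset.mem_singleton]
    rw [Fin.ext_iff]
    have := i.isLt
    constructor
    · intro h; simp only [Fin.val_mk]; omega
    · intro h; simp only [Fin.val_mk] at h; omega
  rw [h1, h2, ← Finset.sum_filter_add_sum_filter_not Finset.univ
    (fun i : Fin d => (i : ℕ) < d - 1), h3, Finset.sum_singleton, xiLast]

lemma pointwise_bound {d : ℕ} (hd : 0 < d) (s : ℝ) (hs : 0 ≤ s) (hs' : s ≤ 1 / 2)
    (m : ℝ) (hm : 1 ≤ m) (ξ : EuclideanSpace ℝ (Fin d))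
    (hA : xiMinusNorm ξ < m / 2) (hB : m / 2 < |xiLast hd ξ|) :
    (1 + ‖ξ‖ ^ 2) ^ s * ((xiMinusNorm ξ + m) ^ 2 + xiLast hd ξ ^ 2) ^ (-(1 / 2) : ℝ)
      ≤ 12 * m ^ (2 * s - 1) := by
  set A := xiMinusNorm ξ with hAdef
  set B := xiLast hd ξ with hBdef
  have hA0 : 0 ≤ A := Real.sqrt_nonneg _
  have hBpos : 0 < |B| := lt_of_le_of_lt (by linarith) hB
  have hnorm : ‖ξ‖ ^ 2 = A ^ 2 + B ^ 2 := norm_sq_split hd ξ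
  -- denominator bound
  have hden : ((A + m) ^ 2 + B ^ 2) ^ (-(1 / 2) : ℝ) ≤ |B| ^ (-1 : ℝ) := by
    have h1 : (0 : ℝ) < B ^ 2 := pow_two_pos_of_ne_zero (abs_pos.mp hBpos)
    have h2 : B ^ 2 ≤ (A + m) ^ 2 + B ^ 2 := by nlinarith
    have h3 : ((A + m) ^ 2 + B ^ 2) ^ (-(1 / 2) : ℝ) ≤ (B ^ 2) ^ (-(1 / 2) : ℝ) :=
      Real.rpow_le_rpow_of_nonpos h1 h2 (by norm_num)
    have h4 : (B ^ 2 : ℝ) ^ (-(1 / 2) : ℝ) = |B| ^ (-1 : ℝ) := by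
      rw [← sq_abs, ← Real.rpow_natCast |B| 2, ← Real.rpow_mul hBpos.le]
      norm_num
    linarith [h3, h4.le, h4.ge]
  -- numerator bound
  have hnum : (1 + ‖ξ‖ ^ 2) ^ s ≤ 6 * |B| ^ (2 * s) := by
    have h1 : 1 + ‖ξ‖ ^ 2 ≤ 6 * |B| ^ 2 := by
      rw [hnorm, ← sq_abs B]
      nlinarith [sq_abs B, abs_nonneg B]
    have h2 : (1 + ‖ξ‖ ^ 2) ^ s ≤ (6 * |B| ^ 2) ^ s :=
      Real.rpow_le_rpow (by positivity) h1 hs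
    have h3 : (6 * |B| ^ 2 : ℝ) ^ s = 6 ^ s * |B| ^ (2 * s) := by
      rw [Real.mul_rpow (by norm_num) (by positivity), ← Real.rpow_natCast |B| 2,
        ← Real.rpow_mul hBpos.le]
      norm_num
    have h4 : (6 : ℝ) ^ s ≤ 6 := by
      calc (6 : ℝ) ^ s ≤ 6 ^ (1 : ℝ) :=
            Real.rpow_le_rpow_of_exponent_le (by norm_num) (by linarith)
        _ = 6 := Real.rpow_one 6
    have h5 : (0 : ℝ) ≤ |B| ^ (2 * s) := Real.rpow_nonneg hBpos.le _
    nlinarith [h2, h3]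
  have hdnn : (0 : ℝ) ≤ ((A + m) ^ 2 + B ^ 2) ^ (-(1 / 2) : ℝ) := Real.rpow_nonneg (by positivity) _
  have hnnn : (0 : ℝ) ≤ (1 + ‖ξ‖ ^ 2) ^ s := Real.rpow_nonneg (by positivity) _
  calc (1 + ‖ξ‖ ^ 2) ^ s * ((A + m) ^ 2 + B ^ 2) ^ (-(1 / 2) : ℝ)
      ≤ (6 * |B| ^ (2 * s)) * |B| ^ (-1 : ℝ) := by
        apply mul_le_mul hnum hden hdnn
        positivity
    _ = 6 * |B| ^ (2 * s - 1) := by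
        rw [mul_assoc, ← Real.rpow_add hBpos]
        ring_nf
    _ ≤ 6 * (m / 2) ^ (2 * s - 1) := by
        have : |B| ^ (2 * s - 1) ≤ (m / 2) ^ (2 * s - 1) :=
          Real.rpow_le_rpow_of_nonpos (by linarith) hB.le (by linarith)
        linarith
    _ ≤ 12 * m ^ (2 * s - 1) := by
        have hmpos : (0 : ℝ) < m := by linarith
        have h1 : (m / 2 : ℝ) ^ (2 * s - 1) = m ^ (2 * s - 1) / 2 ^ (2 * s - 1) :=
          Real.div_rpow (z := 2 * s - 1) hmpos.le (by norm_num)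
        have h2 : ((1 : ℝ) / 2) ≤ 2 ^ (2 * s - 1) := by
          calc ((1 : ℝ) / 2) = 2 ^ (-1 : ℝ) := by
                rw [Real.rpow_neg_one]; norm_num
            _ ≤ 2 ^ (2 * s - 1) :=
                Real.rpow_le_rpow_of_exponent_le (by norm_num) (by linarith)
        have h3 : (0 : ℝ) < m ^ (2 * s - 1) := Real.rpow_pos_of_pos hmpos _
        have h5 : (0 : ℝ) < (2 : ℝ) ^ (2 * s - 1) := Real.rpow_pos_of_pos (by norm_num) _
        rw [h1, ← mul_div_assoc, div_le_iff₀ h5]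
        nlinarith
    
/-- Estimate of the term `I₃`, over the region `{‖ξ⁻‖ < kt/2, |ξ_d| > kt/2}` in the unique continuation
argument for the Helmholtz equation with a random potential. -/
theorem stmt_6 (d : ℕ) (hd : d = 2 ∨ d = 3) (s : ℝ) (hs : 0 ≤ s) (hs' : s ≤ 1 / 2) :
    ∃ C > (0 : ℝ), ∀ k t : ℝ, 0 < k → 0 < t → 1 ≤ k * t →
      ∀ F G : EuclideanSpace ℝ (Fin d) → ℝ, Measurable F → Measurable G →
        (∀ ξ, 0 ≤ F ξ) → (∀ ξ, 0 ≤ G ξ) →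
        (∫⁻ ξ in {ξ | xiMinusNorm ξ < k * t / 2 ∧ k * t / 2 < |xiLast (by omega) ξ|},
            ENNReal.ofReal ((1 + ‖ξ‖ ^ 2) ^ s
              * ((xiMinusNorm ξ + k * t) ^ 2 + xiLast (by omega) ξ ^ 2) ^ (-(1 / 2) : ℝ)
              * F ξ * G ξ)) ≤
          ENNReal.ofReal (C * (k * t) ^ (2 * s - 1))
            * (∫⁻ ξ, ENNReal.ofReal (F ξ ^ 2)) ^ (1 / 2 : ℝ)
            * (∫⁻ ξ, ENNReal.ofReal (G ξ ^ 2)) ^ (1 / 2 : ℝ) := by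
  refine ⟨12, by norm_num, ?_⟩
  intro k t hk ht hkt F G hF hG hF0 hG0
  have hd0 : 0 < d := by omega
  set m := k * t with hm
  have hmpos : (0 : ℝ) < m := by positivity
  have hc0 : (0 : ℝ) ≤ 12 * m ^ (2 * s - 1) := by positivity
  -- Step 1: pointwise bound on the set
  have step1 : (∫⁻ ξ in {ξ | xiMinusNorm ξ < m / 2 ∧ m / 2 < |xiLast hd0 ξ|},
        ENNReal.ofReal ((1 + ‖ξ‖ ^ 2) ^ s
          * ((xiMinusNorm ξ + m) ^ 2 + xiLast hd0 ξ ^ 2) ^ (-(1 / 2) : ℝ)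
          * F ξ * G ξ)) ≤
      ∫⁻ ξ in {ξ | xiMinusNorm ξ < m / 2 ∧ m / 2 < |xiLast hd0 ξ|},
        ENNReal.ofReal (12 * m ^ (2 * s - 1) * F ξ * G ξ) := by
    apply setLIntegral_mono
    · apply Measurable.ennreal_ofReal
      exact ((measurable_const.mul hF).mul hG)
    · intro ξ hξ
      apply ENNReal.ofReal_le_ofReal
      have := pointwise_bound hd0 s hs hs' m hkt ξ hξ.1 hξ.2
      have h1 : 0 ≤ F ξ := hF0 ξ
      have h2 : 0 ≤ G ξ := hG0 ξ
      have h3 : (0 : ℝ) ≤ (1 + ‖ξ‖ ^ 2) ^ s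
          * ((xiMinusNorm ξ + m) ^ 2 + xiLast hd0 ξ ^ 2) ^ (-(1 / 2) : ℝ) := by
        have := Real.rpow_nonneg (x := 1 + ‖ξ‖ ^ 2) (by positivity) s
        have := Real.rpow_nonneg
          (x := (xiMinusNorm ξ + m) ^ 2 + xiLast hd0 ξ ^ 2) (by positivity) (-(1 / 2) : ℝ)
        positivity
      nlinarith [mul_le_mul_of_nonneg_right
        (mul_le_mul_of_nonneg_right this h1) h2]
  have step2 : (∫⁻ ξ in {ξ | xiMinusNorm ξ < m / 2 ∧ m / 2 < |xiLast hd0 ξ|},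
        ENNReal.ofReal (12 * m ^ (2 * s - 1) * F ξ * G ξ)) ≤
      ∫⁻ ξ, ENNReal.ofReal (12 * m ^ (2 * s - 1) * F ξ * G ξ) :=
    setLIntegral_le_lintegral _ _
  have step3 : (∫⁻ ξ, ENNReal.ofReal (12 * m ^ (2 * s - 1) * F ξ * G ξ)) =
      ENNReal.ofReal (12 * m ^ (2 * s - 1)) *
        ∫⁻ ξ, ENNReal.ofReal (F ξ) * ENNReal.ofReal (G ξ) := by
    rw [← lintegral_const_mul (f := fun ξ => ENNReal.ofReal (F ξ) * ENNReal.ofReal (G ξ)) _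
      ((hF.ennreal_ofReal).mul (hG.ennreal_ofReal))]
    congr 1
    ext ξ
    rw [mul_assoc, ENNReal.ofReal_mul hc0, ENNReal.ofReal_mul (hF0 ξ)]
  have step4 : (∫⁻ ξ, ENNReal.ofReal (F ξ) * ENNReal.ofReal (G ξ)) ≤
      (∫⁻ ξ, ENNReal.ofReal (F ξ ^ 2)) ^ (1 / 2 : ℝ)
        * (∫⁻ ξ, ENNReal.ofReal (G ξ ^ 2)) ^ (1 / 2 : ℝ) := by
    have hpq : Real.HolderConjugate 2 2 := ⟨by norm_num, by norm_num, by norm_num⟩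
    have := ENNReal.lintegral_mul_le_Lp_mul_Lq (volume) hpq
      (hF.ennreal_ofReal).aemeasurable (hG.ennreal_ofReal).aemeasurable
    have heq : ∀ (H : EuclideanSpace ℝ (Fin d) → ℝ), (∀ ξ, 0 ≤ H ξ) →
        (∫⁻ ξ, ENNReal.ofReal (H ξ) ^ (2 : ℝ)) = ∫⁻ ξ, ENNReal.ofReal (H ξ ^ 2) := by
      intro H hH
      congr 1; ext ξ
      rw [ENNReal.ofReal_rpow_of_nonneg (hH ξ) (by norm_num : (0:ℝ) ≤ 2)]
      norm_num [Real.rpow_natCast]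
    calc (∫⁻ ξ, ENNReal.ofReal (F ξ) * ENNReal.ofReal (G ξ))
        ≤ (∫⁻ ξ, ENNReal.ofReal (F ξ) ^ (2 : ℝ)) ^ (1 / 2 : ℝ)
          * (∫⁻ ξ, ENNReal.ofReal (G ξ) ^ (2 : ℝ)) ^ (1 / 2 : ℝ) := this
      _ = _ := by rw [heq F hF0, heq G hG0]
  calc (∫⁻ ξ in {ξ | xiMinusNorm ξ < m / 2 ∧ m / 2 < |xiLast hd0 ξ|},
        ENNReal.ofReal ((1 + ‖ξ‖ ^ 2) ^ s
          * ((xiMinusNorm ξ + m) ^ 2 + xiLast hd0 ξ ^ 2) ^ (-(1 / 2) : ℝ)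
          * F ξ * G ξ))
      ≤ ∫⁻ ξ, ENNReal.ofReal (12 * m ^ (2 * s - 1) * F ξ * G ξ) := step1.trans step2
    _ = ENNReal.ofReal (12 * m ^ (2 * s - 1)) *
          ∫⁻ ξ, ENNReal.ofReal (F ξ) * ENNReal.ofReal (G ξ) := step3
    _ ≤ ENNReal.ofReal (12 * m ^ (2 * s - 1)) *
          ((∫⁻ ξ, ENNReal.ofReal (F ξ ^ 2)) ^ (1 / 2 : ℝ)
            * (∫⁻ ξ, ENNReal.ofReal (G ξ ^ 2)) ^ (1 / 2 : ℝ)) :=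
        mul_le_mul_right step4 _
    _ = _ := by rw [mul_assoc]
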